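/- Let Q be a finite (left) quasifield with q elements. If A, B, C ⊆ Q, then |A + B·C| ≥ q − q³/(|A|·|B|·|C| + q²), where A + B·C = {a + b·c : a ∈ A, b ∈ B, c ∈ C}. -/

import Mathlib

/-- A finite (left) quasifield. -/
class Quasifield (Q : Type*) extends AddCommGroup Q, Mul Q, One Q where
  one_ne_zero : (1 : Q) ≠ 0
  one_mul : ∀ a : Q, 1 * a = a
  mul_one : ∀ a : Q, a * 1 = a
  zero_mul : ∀ a : Q, 0 * a = 0
  mul_zero : ∀ a : Q, a * 0 = 0
  mul_ne_zero : ∀ a b : Q, a ≠ 0 → b ≠ 0 → a * b ≠ 0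
  existsUnique_mul_left : ∀ a b : Q, a ≠ 0 → b ≠ 0 → ∃! x : Q, a * x = b
  existsUnique_mul_right : ∀ a b : Q, a ≠ 0 → b ≠ 0 → ∃! y : Q, y * a = b
  left_distrib : ∀ a b c : Q, a * (b + c) = a * b + a * c
  existsUnique_affine : ∀ a b c : Q, a ≠ b → ∃! x : Q, a * x = b * x + c

/-- The kernel of a quasifield. -/
def Quasifield.kernel (Q : Type*) [Quasifield Q] : Set Q :=
  {k | (∀ x y : Q, (x + y) * k = x * k + y * k) ∧ ∀ x y : Q, (x * y) * k = x * (y * k)}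

open Finset

lemma qf_affine_bij {Q : Type*} [Quasifield Q] {b b' : Q} (h : b ≠ b') :
    Function.Bijective (fun c : Q => b * c - b' * c) := by
  rw [Function.bijective_iff_existsUnique]
  intro d
  obtain ⟨x, hx, hu⟩ := Quasifield.existsUnique_affine b b' d h
  refine ⟨x, ?_, fun y hy => hu y ?_⟩
  · show b * x - b' * x = d
    rw [hx]; abel
  · have hy' : b * y - b' * y = d := hy
    show b * y = b' * y + d
    rw [← hy']; abel

section QF
variable {Q : Type*} [Quasifield Q] [Fintype Q] [DecidableEq Q]

/-- balanced indicator of `A` -/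
noncomputable def qphi (A : Finset Q) : Q → ℝ :=
  fun x => (if x ∈ A then (1:ℝ) else 0) - (A.card : ℝ) / (Fintype.card Q)

/-- autocorrelation of `qphi A` -/
noncomputable def qPhi (A : Finset Q) : Q → ℝ :=
  fun d => ∑ y : Q, qphi A y * qphi A (y - d)

lemma sum_qphi (A : Finset Q) : ∑ x : Q, qphi A x = 0 := by
  have hq : (Fintype.card Q : ℝ) ≠ 0 := by
    exact_mod_cast Fintype.card_ne_zero
  simp only [qphi, Finset.sum_sub_distrib]
  rw [Finset.sum_boole, Finset.sum_const]
  simp only [Finset.filter_univ_mem, Finset.card_univ, nsmul_eq_mul]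
  field_simp
  ring

lemma sum_qphi_shift (A : Finset Q) (v : Q) : ∑ x : Q, qphi A (x - v) = 0 := by
  have := Equiv.sum_comp (Equiv.subRight v) (qphi A)
  simpa using this.trans (sum_qphi A)

lemma qPhi_zero_le (A : Finset Q) : qPhi A 0 ≤ (A.card : ℝ) := by
  have hq : (0:ℝ) < (Fintype.card Q : ℝ) := by exact_mod_cast Fintype.card_pos
  set t : ℝ := (A.card : ℝ) / (Fintype.card Q) with ht
  have key : ∀ x : Q, qphi A x * qphi A (x - 0) =
      (if x ∈ A then (1:ℝ) - 2*t else 0) + t^2 := by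
    intro x
    simp only [sub_zero, qphi]
    split <;> ring
  have ht0 : 0 ≤ t := div_nonneg (by positivity) hq.le
  calc qPhi A 0 = ∑ x : Q, ((if x ∈ A then (1:ℝ) - 2*t else 0) + t^2) := by
        exact Finset.sum_congr rfl fun x _ => key x
    _ = (A.card : ℝ) * (1 - 2*t) + (Fintype.card Q) * t^2 := by
        rw [Finset.sum_add_distrib, Finset.sum_ite_mem, Finset.univ_inter,
          Finset.sum_const, Finset.sum_const, Finset.card_univ]
        simp [nsmul_eq_mul, mul_comm]
    _ = (A.card : ℝ) - (A.card : ℝ) * t := by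
        have : (Fintype.card Q : ℝ) * t = (A.card : ℝ) := by
          rw [ht]; field_simp [hq.ne']
        rw [pow_two, ← mul_assoc, this]; ring
    _ ≤ (A.card : ℝ) := by nlinarith [mul_nonneg (Nat.cast_nonneg A.card (α := ℝ)) ht0]

lemma qPhi_corr (A : Finset Q) (v w : Q) :
    ∑ x : Q, qphi A (x - v) * qphi A (x - w) = qPhi A (w - v) := by
  have := Equiv.sum_comp (Equiv.addRight v)
    (fun x => qphi A (x - v) * qphi A (x - w))
  rw [← this]
  unfold qPhi
  refine Finset.sum_congr rfl fun y _ => ?_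
  have h1 : y + v - v = y := by abel
  have h2 : y + v - w = y - (w - v) := by abel
  simp only [Equiv.coe_addRight, h1, h2]

lemma sum_qPhi (A : Finset Q) : ∑ d : Q, qPhi A d = 0 := by
  unfold qPhi
  rw [Finset.sum_comm]
  refine Finset.sum_eq_zero fun y _ => ?_
  rw [← Finset.mul_sum]
  have : ∑ d : Q, qphi A (y - d) = 0 := by
    have := Equiv.sum_comp (Equiv.subLeft y) (qphi A)
    simpa using this.trans (sum_qphi A)
  rw [this, mul_zero]

lemma sum_qPhi_affine (A : Finset Q) {b b' : Q} (h : b ≠ b') :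
    ∑ c : Q, qPhi A (b * c - b' * c) = 0 := by
  have hbij := qf_affine_bij h
  have := Function.Bijective.sum_comp hbij (qPhi A)
  exact this.trans (sum_qPhi A)

end QF

section QF2
variable {Q : Type*} [Quasifield Q] [Fintype Q] [DecidableEq Q]

lemma qf_energy (A B C : Finset Q) :
    ∑ x : Q, (∑ b ∈ B, ∑ c ∈ C, qphi A (x - b*c))^2
      ≤ (C.card : ℝ) * B.card * (Fintype.card Q) * A.card := by
  set G : Q → Q → ℝ := fun c x => ∑ b ∈ B, qphi A (x - b*c) with hG
  have hswap : ∀ x : Q, ∑ b ∈ B, ∑ c ∈ C, qphi A (x - b*c) = ∑ c ∈ C, G c x := by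
    intro x; exact Finset.sum_comm
  have step1 : ∑ x : Q, (∑ b ∈ B, ∑ c ∈ C, qphi A (x - b*c))^2
      ≤ (C.card : ℝ) * ∑ c ∈ C, ∑ x : Q, (G c x)^2 := by
    calc ∑ x : Q, (∑ b ∈ B, ∑ c ∈ C, qphi A (x - b*c))^2
        = ∑ x : Q, (∑ c ∈ C, G c x)^2 := by
          exact Finset.sum_congr rfl fun x _ => by rw [hswap]
      _ ≤ ∑ x : Q, (C.card : ℝ) * ∑ c ∈ C, (G c x)^2 := by
          refine Finset.sum_le_sum fun x _ => ?_
          exact sq_sum_le_card_mul_sum_sq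
      _ = (C.card : ℝ) * ∑ x : Q, ∑ c ∈ C, (G c x)^2 := by
          rw [← Finset.mul_sum]
      _ = (C.card : ℝ) * ∑ c ∈ C, ∑ x : Q, (G c x)^2 := by
          congr 1; exact Finset.sum_comm
  have step2 : ∑ c ∈ C, ∑ x : Q, (G c x)^2 ≤ ∑ c : Q, ∑ x : Q, (G c x)^2 := by
    refine Finset.sum_le_sum_of_subset_of_nonneg (Finset.subset_univ C)
      fun c _ _ => Finset.sum_nonneg fun x _ => sq_nonneg _
  have step3 : ∑ c : Q, ∑ x : Q, (G c x)^2
      = (B.card : ℝ) * ((Fintype.card Q : ℝ) * qPhi A 0) := by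
    have expand : ∀ c : Q, ∑ x : Q, (G c x)^2
        = ∑ b ∈ B, ∑ b' ∈ B, qPhi A (b' * c - b * c) := by
      intro c
      have : ∀ x : Q, (G c x)^2
          = ∑ b ∈ B, ∑ b' ∈ B, qphi A (x - b*c) * qphi A (x - b'*c) := by
        intro x
        rw [hG, pow_two, Finset.sum_mul_sum]
      rw [Finset.sum_congr rfl fun x _ => this x]
      rw [Finset.sum_comm]
      refine Finset.sum_congr rfl fun b _ => ?_
      rw [Finset.sum_comm]
      refine Finset.sum_congr rfl fun b' _ => ?_
      exact qPhi_corr A (b*c) (b'*c)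
    rw [Finset.sum_congr rfl fun c _ => expand c, Finset.sum_comm]
    have inner : ∀ b ∈ B, ∑ c : Q, ∑ b' ∈ B, qPhi A (b' * c - b * c)
        = (Fintype.card Q : ℝ) * qPhi A 0 := by
      intro b hb
      rw [Finset.sum_comm]
      rw [Finset.sum_eq_single_of_mem b hb
        (fun b' _ hne => sum_qPhi_affine A hne)]
      simp [Finset.sum_const, Finset.card_univ, nsmul_eq_mul]
    calc ∑ b ∈ B, ∑ c : Q, ∑ b' ∈ B, qPhi A (b' * c - b * c)
        = ∑ _b ∈ B, (Fintype.card Q : ℝ) * qPhi A 0 :=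
          Finset.sum_congr rfl inner
      _ = (B.card : ℝ) * ((Fintype.card Q : ℝ) * qPhi A 0) := by
          rw [Finset.sum_const, nsmul_eq_mul]
  have hPhi0 : 0 ≤ qPhi A 0 := by
    unfold qPhi
    refine Finset.sum_nonneg fun y _ => ?_
    rw [sub_zero, ← pow_two]; exact sq_nonneg _
  calc ∑ x : Q, (∑ b ∈ B, ∑ c ∈ C, qphi A (x - b*c))^2
      ≤ (C.card : ℝ) * ((B.card : ℝ) * ((Fintype.card Q : ℝ) * qPhi A 0)) := by
        rw [← step3]
        refine step1.trans ?_
        exact mul_le_mul_of_nonneg_left step2 (Nat.cast_nonneg _)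
    _ ≤ (C.card : ℝ) * B.card * (Fintype.card Q) * A.card := by
        have := qPhi_zero_le A
        have h1 : (0:ℝ) ≤ (C.card : ℝ) * B.card * (Fintype.card Q) := by positivity
        calc (C.card : ℝ) * ((B.card : ℝ) * ((Fintype.card Q : ℝ) * qPhi A 0))
            = (C.card : ℝ) * B.card * (Fintype.card Q) * qPhi A 0 := by ring
          _ ≤ (C.card : ℝ) * B.card * (Fintype.card Q) * A.card :=
              mul_le_mul_of_nonneg_left this h1
end QF2

section QF3
variable {Q : Type*} [Quasifield Q] [Fintype Q] [DecidableEq Q]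

open scoped Pointwise

lemma qf_key (A B C : Finset Q) (hA : A.Nonempty) (hB : B.Nonempty) (hC : C.Nonempty) :
    ((Fintype.card Q : ℝ) - (A + B * C).card) * ((A.card : ℝ) * B.card * C.card)
      ≤ ((A + B * C).card : ℝ) * (Fintype.card Q : ℝ)^2 := by
  classical
  set n : ℝ := (Fintype.card Q : ℝ) with hn'
  have hn : (0:ℝ) < n := by
    simp only [hn']; exact_mod_cast Fintype.card_pos
  set K : ℝ := (A.card : ℝ) * B.card * C.card with hK'
  have hK : (0:ℝ) < K := by
    simp only [hK']
    have := hA.card_pos; have := hB.card_pos; have := hC.card_pos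
    positivity
  set S : Finset Q := A + B * C with hS'
  set s : ℝ := (S.card : ℝ) with hs'
  have hsn : s ≤ n := by
    simp only [hs', hn']
    exact_mod_cast Finset.card_le_univ S
  set F : Q → ℝ := fun x => ∑ b ∈ B, ∑ c ∈ C, qphi A (x - b*c) with hF
  -- total sum of F is zero
  have hsum : ∑ x : Q, F x = 0 := by
    simp only [hF]
    rw [Finset.sum_comm]
    refine Finset.sum_eq_zero fun b _ => ?_
    rw [Finset.sum_comm]
    exact Finset.sum_eq_zero fun c _ => sum_qphi_shift A (b * c)
  -- value of F off the sumset
  have hTval : ∀ x : Q, x ∉ S → F x = -(K / n) := by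
    intro x hx
    have hnotA : ∀ b ∈ B, ∀ c ∈ C, x - b * c ∉ A := by
      intro b hb c hc h
      refine hx ?_
      have := Finset.add_mem_add h (Finset.mul_mem_mul hb hc)
      simpa [hS'] using this
    simp only [hF]
    have : ∀ b ∈ B, ∀ c ∈ C, qphi A (x - b*c) = -((A.card : ℝ) / n) := by
      intro b hb c hc
      simp [qphi, hnotA b hb c hc, hn']
    rw [Finset.sum_congr rfl fun b hb =>
      Finset.sum_congr rfl fun c hc => this b hb c hc]
    simp only [Finset.sum_const, nsmul_eq_mul, hK']
    ring
  -- energy bound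
  have hE : ∑ x : Q, F x ^ 2 ≤ K * n := by
    have h := qf_energy A B C
    simp only [hF]
    refine h.trans (le_of_eq ?_)
    simp only [hK', hn']; ring
  -- split sums over S and its complement
  have hsplit : ∀ f : Q → ℝ,
      ∑ x ∈ Finset.univ \ S, f x + ∑ x ∈ S, f x = ∑ x : Q, f x :=
    fun f => Finset.sum_sdiff (Finset.subset_univ S)
  have hTcard : ((Finset.univ \ S).card : ℝ) = n - s := by
    rw [Finset.card_sdiff_of_subset (Finset.subset_univ S)]
    have : S.card ≤ Finset.univ.card := Finset.card_le_univ S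
    push_cast [Nat.cast_sub this]
    simp [hn', hs', Finset.card_univ]
  have hT1 : ∑ x ∈ Finset.univ \ S, F x = (n - s) * (-(K / n)) := by
    rw [Finset.sum_congr rfl fun x hx =>
      hTval x (Finset.mem_sdiff.mp hx).2]
    rw [Finset.sum_const, nsmul_eq_mul, hTcard]
  have hT2 : ∑ x ∈ Finset.univ \ S, F x ^ 2 = (n - s) * (K / n)^2 := by
    have : ∀ x ∈ Finset.univ \ S, F x ^ 2 = (K / n)^2 := by
      intro x hx
      rw [hTval x (Finset.mem_sdiff.mp hx).2]; ring
    rw [Finset.sum_congr rfl this, Finset.sum_const, nsmul_eq_mul, hTcard]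
  have hS1 : ∑ x ∈ S, F x = (n - s) * (K / n) := by
    have := hsplit F
    rw [hsum, hT1] at this
    linarith
  have hS2 : ∑ x ∈ S, F x ^ 2 ≤ K * n - (n - s) * (K / n)^2 := by
    have := hsplit (fun x => F x ^ 2)
    rw [hT2] at this
    linarith [hE]
  have hCS : (∑ x ∈ S, F x)^2 ≤ s * ∑ x ∈ S, F x ^ 2 :=
    sq_sum_le_card_mul_sum_sq
  -- combine
  have key : ((n - s) * (K / n))^2 ≤ s * (K * n - (n - s) * (K / n)^2) := by
    calc ((n - s) * (K / n))^2 = (∑ x ∈ S, F x)^2 := by rw [hS1]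
      _ ≤ s * ∑ x ∈ S, F x ^ 2 := hCS
      _ ≤ s * (K * n - (n - s) * (K / n)^2) := by
          have hs0 : (0:ℝ) ≤ s := by simp [hs']
          exact mul_le_mul_of_nonneg_left hS2 hs0
  -- clear denominators:  (n-s)*K ≤ s*n^2
  have hn0 : n ≠ 0 := ne_of_gt hn
  have e1 : ((n - s) * (K / n))^2 * n^2 = (n - s)^2 * K^2 := by
    field_simp
  have e2 : s * (K * n - (n - s) * (K / n)^2) * n^2
      = s * K * n^3 - s * (n - s) * K^2 := by
    field_simp
  have key2 : (n - s)^2 * K^2 ≤ s * K * n^3 - s * (n - s) * K^2 := by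
    have h := mul_le_mul_of_nonneg_right key (sq_nonneg n)
    rwa [e1, e2] at h
  nlinarith [key2, mul_pos hK hn]

end QF3

open scoped Pointwise
/-- Theorem 1.8: for `A, B, C ⊆ Q`, `|A + B·C| ≥ q - q³/(|A||B||C| + q²)`. -/
theorem stmt_4 {Q : Type*} [Quasifield Q] [Fintype Q] [DecidableEq Q]
    (A B C : Finset Q) :
    (Fintype.card Q : ℝ) -
        (Fintype.card Q : ℝ) ^ 3 /
          ((A.card : ℝ) * B.card * C.card + (Fintype.card Q : ℝ) ^ 2) ≤
      ((A + B * C).card : ℝ) := by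
  classical
  have hn : (0:ℝ) < (Fintype.card Q : ℝ) := by exact_mod_cast Fintype.card_pos
  by_cases h : A.Nonempty ∧ B.Nonempty ∧ C.Nonempty
  · obtain ⟨hA, hB, hC⟩ := h
    have key := qf_key A B C hA hB hC
    set n : ℝ := (Fintype.card Q : ℝ) with hn'
    set K : ℝ := (A.card : ℝ) * B.card * C.card with hK'
    set s : ℝ := ((A + B * C).card : ℝ) with hs'
    have hK0 : (0:ℝ) ≤ K := by simp only [hK']; positivity
    have hpos : (0:ℝ) < K + n^2 := by positivity
    have h1 : (n - s) * (K + n^2) ≤ n^3 := by nlinarith [key]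
    have h2 : n - s ≤ n^3 / (K + n^2) := (le_div_iff₀ hpos).mpr h1
    linarith
  · have hK0 : (A.card : ℝ) * B.card * C.card = 0 := by
      have : A.card = 0 ∨ B.card = 0 ∨ C.card = 0 := by
        by_contra hc
        push_neg at hc
        exact h ⟨Finset.card_pos.mp (Nat.pos_of_ne_zero hc.1),
          Finset.card_pos.mp (Nat.pos_of_ne_zero hc.2.1),
          Finset.card_pos.mp (Nat.pos_of_ne_zero hc.2.2)⟩
      rcases this with h' | h' | h' <;> simp [h']
    rw [hK0, zero_add]
    have : (Fintype.card Q : ℝ)^3 / (Fintype.card Q : ℝ)^2 = (Fintype.card Q : ℝ) := by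
      rw [pow_succ]
      exact mul_div_cancel_left₀ _ (by positivity)
    rw [this, sub_self]
    positivity
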